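/- Define real sequences (α_g)_{g≥0} by α_0 = 1 and α_{g+1} = ((25g² − 1)/(8√6))·α_g − (1/2)·Σ_{m=1}^{g} α_m·α_{g+1−m} (the asymptotic coefficients of Painlevé I), and (b_g)_{g≥1} by b_1 = 2/3 and b_{g+1} = (4/3)(25g² − 1)·b_g + Σ_{m=1}^{g} b_m·b_{g+1−m} (the ν = 2 case of the leading-pole recursion). Then for every g ≥ 1, b_g = −2^{5g−1}·(2/3)^{g/2}·α_g. -/

import Mathlib

theorem leading_pole_coefficients_eq_painleve_coefficients
    (α : ℕ → ℝ) (hα0 : α 0 = 1)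
    (hαrec : ∀ g : ℕ, α (g + 1) =
      ((25 * (g : ℝ) ^ 2 - 1) / (8 * Real.sqrt 6)) * α g
        - (1 / 2) * ∑ m ∈ Finset.Icc 1 g, α m * α (g + 1 - m))
    (b : ℕ → ℝ) (hb1 : b 1 = 2 / 3)
    (hbrec : ∀ g : ℕ, 1 ≤ g → b (g + 1) =
      (4 / 3) * (25 * (g : ℝ) ^ 2 - 1) * b g
        + ∑ m ∈ Finset.Icc 1 g, b m * b (g + 1 - m)) :
    ∀ g : ℕ, 1 ≤ g →
      b g = -(2 : ℝ) ^ (5 * g - 1) * Real.sqrt (2 / 3) ^ g * α g := by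
  set s := Real.sqrt (2 / 3) with hs
  have hs0 : (0:ℝ) < s := Real.sqrt_pos.mpr (by norm_num)
  have h6 : Real.sqrt 6 = 3 * s := by
    rw [hs, show (6:ℝ) = 3 ^ 2 * (2 / 3) by norm_num,
      Real.sqrt_mul (by positivity), Real.sqrt_sq (by norm_num)]
  have hα1 : α 1 = -(1 / (8 * Real.sqrt 6)) := by
    have h := hαrec 0
    simp [hα0] at h
    rw [h]; ring
  have key : ∀ n : ℕ, ∀ m : ℕ, 1 ≤ m → m ≤ n →
      b m = -(2 : ℝ) ^ (5 * m - 1) * s ^ m * α m := by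
    intro n
    induction n with
    | zero => intro m h1 h2; omega
    | succ n ih =>
      intro m hm1 hm2
      rcases Nat.lt_or_ge m (n + 1) with h | h
      · exact ih m hm1 (by omega)
      have hmn : m = n + 1 := by omega
      subst hmn
      rcases Nat.eq_zero_or_pos n with hn | hn1
      · subst hn
        rw [hb1, hα1, h6]
        have : s ≠ 0 := ne_of_gt hs0
        field_simp
        ring
      · have hsum : ∑ m ∈ Finset.Icc 1 n, b m * b (n + 1 - m)
            = (2:ℝ) ^ (5 * n + 3) * s ^ (n + 1)
              * ∑ m ∈ Finset.Icc 1 n, α m * α (n + 1 - m) := by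
          rw [Finset.mul_sum]
          apply Finset.sum_congr rfl
          intro x hx
          simp only [Finset.mem_Icc] at hx
          rw [ih x hx.1 hx.2, ih (n + 1 - x) (by omega) (by omega)]
          have h2 : (2:ℝ) ^ (5 * x - 1) * (2:ℝ) ^ (5 * (n + 1 - x) - 1)
              = (2:ℝ) ^ (5 * n + 3) := by rw [← pow_add]; congr 1; omega
          have hsx : s ^ x * s ^ (n + 1 - x) = s ^ (n + 1) := by
            rw [← pow_add]; congr 1; omega
          rw [← h2, ← hsx]; ring
        rw [hbrec n hn1, hsum, ih n hn1 le_rfl, hαrec n, h6]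
        have e1 : 5 * (n + 1) - 1 = 5 * n + 4 := by omega
        have e2 : (2:ℝ) ^ (5 * n + 4) = (2:ℝ) ^ (5 * n - 1) * 32 := by
          rw [show 5 * n + 4 = (5 * n - 1) + 5 by omega, pow_add]; norm_num
        have e3 : (2:ℝ) ^ (5 * n + 3) = (2:ℝ) ^ (5 * n - 1) * 16 := by
          rw [show 5 * n + 3 = (5 * n - 1) + 4 by omega, pow_add]; norm_num
        have hsne : s ≠ 0 := ne_of_gt hs0
        rw [e1, e2, e3, pow_succ]
        field_simp
        ring
  intro g hg
  exact key g g hg le_rfl
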